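/- arXiv:1101.1993 — 2 statements merged into one kernel-verified Lean document; each statement's English description precedes it below -/
import Mathlib

section
/- Let (G̃, G) be a ℤ/2-pair. Then for any vertices x, y of G̃, the graph distance in G̃ satisfies d_{G̃}(x, y) = min{ ℓ(p) : p is an (x,y)-admissible path in G }, where ℓ(p) denotes the length of p. -/
/-- A multigraph: a set of vertices `V`, a set of edges `E`, and two endpoint maps.
The pair `(src e, tgt e)` records an (arbitrary) orientation of the unoriented edge `e`;
graphs are regarded as unoriented. -/
structure Multigraph (V E : Type) where
  src : E → V
  tgt : E → V

namespace Multigraph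

variable {V E : Type}

/-- The edge `e` is an edge between `u` and `v` (in either direction). -/
def EndsAt (G : Multigraph V E) (e : E) (u v : V) : Prop :=
  (G.src e = u ∧ G.tgt e = v) ∨ (G.src e = v ∧ G.tgt e = u)

/-- A path (walk) in a multigraph from `u` to `v`: a sequence
`(v₀, e₁, v₁, …, e_n, v_n)` where each `e_i` is an edge between `v_{i-1}` and `v_i`. -/
inductive Walk (G : Multigraph V E) : V → V → Type
  | nil (v : V) : Walk G v v
  | cons {u v w : V} (e : E) (h : G.EndsAt e u v) (p : Walk G v w) : Walk G u w

namespace Walk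

variable {G : Multigraph V E}

/-- The length of a path. -/
def length : ∀ {u v : V}, G.Walk u v → ℕ
  | _, _, .nil _ => 0
  | _, _, .cons _ _ p => length p + 1

/-- The list of edges of a path. -/
def edges : ∀ {u v : V}, G.Walk u v → List E
  | _, _, .nil _ => []
  | _, _, .cons e _ p => e :: edges p

/-- The list of vertices of a path (including the first one). -/
def verts : ∀ {u v : V}, G.Walk u v → List V
  | _, _, .nil v => [v]
  | u, _, .cons _ _ p => u :: verts p

/-- A path has a backtrack if for some `i` it traverses the same edge at steps
`i+1` and `i+2` returning to the same vertex, i.e. `v_i = v_{i+2}` and `e_{i+1} = e_{i+2}`. -/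
def HasBacktrack {u v : V} (p : G.Walk u v) : Prop :=
  ∃ i : ℕ, i + 1 < p.edges.length ∧ p.edges[i]? = p.edges[i + 1]? ∧
    p.verts[i]? = p.verts[i + 2]?

end Walk

/-- A multigraph is connected if any two vertices are joined by a path. -/
def Connected (G : Multigraph V E) : Prop := ∀ u v : V, Nonempty (G.Walk u v)

/-- `u` and `v` can be joined by a path avoiding all edges in `F`. -/
def ReachAvoid (G : Multigraph V E) (F : Set E) (u v : V) : Prop :=
  ∃ p : G.Walk u v, ∀ e ∈ p.edges, e ∉ F

/-- A set of edges `w` is a wall (a cut) if removing these edges from the graph separates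
it into exactly two connected components (the associated half-spaces `A` and `B`). -/
def IsWall (G : Multigraph V E) (w : Set E) : Prop :=
  ∃ A B : Set V, A.Nonempty ∧ B.Nonempty ∧ Disjoint A B ∧ A ∪ B = Set.univ ∧
    ∀ u v : V, G.ReachAvoid w u v ↔ ((u ∈ A ∧ v ∈ A) ∨ (u ∈ B ∧ v ∈ B))

/-- A wall structure: a set of walls such that every edge belongs to exactly one wall. -/
def IsWallStructure (G : Multigraph V E) (W : Set (Set E)) : Prop :=
  (∀ w ∈ W, G.IsWall w) ∧ ∀ e : E, ∃! w, w ∈ W ∧ e ∈ w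

/-- The set of edges `w` separates `u` from `v` if after removing `w` there is
no path from `u` to `v` (i.e. they lie in different half-spaces). -/
def Separates (G : Multigraph V E) (w : Set E) (u v : V) : Prop :=
  ¬ G.ReachAvoid w u v

/-- The wall pseudometric associated with a wall structure `W`:
the number of walls of `W` separating `x` from `y`. -/
noncomputable def wallDistOf (G : Multigraph V E) (W : Set (Set E)) (x y : V) : ℕ :=
  {w : Set E | w ∈ W ∧ G.Separates w x y}.ncard

/-- The graph metric: the length of a shortest path between two vertices. -/
noncomputable def graphDist (G : Multigraph V E) (u v : V) : ℕ :=
  sInf {n : ℕ | ∃ p : G.Walk u v, p.length = n}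

/-- A simple loop: a closed path of positive length with no repeated edges and no
repeated vertices (except that the first and last vertex coincide). -/
def IsSimpleLoop (G : Multigraph V E) {v : V} (p : G.Walk v v) : Prop :=
  0 < p.length ∧ p.edges.Nodup ∧ p.verts.dropLast.Nodup

/-- The girth of a multigraph: the length of a shortest simple loop. -/
noncomputable def girth (G : Multigraph V E) : ℕ :=
  sInf {n : ℕ | ∃ (v : V) (p : G.Walk v v), G.IsSimpleLoop p ∧ p.length = n}

end Multigraph

namespace Multigraph

variable {V E : Type}

/-- A graph is 2-connected if removing any single edge does not disconnect it
(equivalently, every edge lies on a simple loop). -/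
def TwoConnected (G : Multigraph V E) : Prop :=
  G.Connected ∧ ∀ (e : E) (u v : V), G.ReachAvoid {e} u v

/-- `T` is (the edge set of) a spanning tree of the finite graph `G`: the edges of `T`
connect all vertices of `G` and `|T| = |V(G)| - 1` (so the subgraph on `T` is a tree). -/
def IsSpanningTree [Fintype V] (G : Multigraph V E) (T : Finset E) : Prop :=
  (∀ u v : V, ∃ p : G.Walk u v, ∀ e ∈ p.edges, e ∈ T) ∧ T.card + 1 = Fintype.card V

variable [Fintype E] [DecidableEq E]

/-- Given a spanning tree `T` with `S = E \ T = Tᶜ`, crossing the edge `e` changes the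
second coordinate `τ ⊆ S` of a vertex of the `ℤ/2`-homology cover to `τ △ {e}` if `e ∈ S`,
and leaves it unchanged if `e ∈ T`. -/
def tauStep (T : Finset E) (e : E) (τ : {τ : Finset E // τ ⊆ Tᶜ}) :
    {τ : Finset E // τ ⊆ Tᶜ} :=
  if he : e ∈ Tᶜ then
    ⟨symmDiff τ.1 {e}, fun x hx => by
      rcases Finset.mem_symmDiff.mp hx with ⟨h1, _⟩ | ⟨h1, _⟩
      · exact τ.2 h1
      · rwa [Finset.mem_singleton.mp h1]⟩
  else τ

/-- The `ℤ/2`-homology cover of `G` associated with the spanning tree `T` (with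
`S = Tᶜ`): vertices are `V × 𝒫(S)`, edges are `E × 𝒫(S)`, where the edge `(e, τ)`
joins `(x, τ)` to `(y, τ)` if `e ∉ S`, and `(x, τ)` to `(y, τ △ {e})` if `e ∈ S`
with the orientation `x → y`. -/
def cover (G : Multigraph V E) (T : Finset E) :
    Multigraph (V × {τ : Finset E // τ ⊆ Tᶜ}) (E × {τ : Finset E // τ ⊆ Tᶜ}) where
  src p := (G.src p.1, p.2)
  tgt p := (G.tgt p.1, tauStep T p.1 p.2)

/-- The covering projection maps paths in the cover to paths in the base graph,
forgetting the second coordinates. -/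
def projWalk {G : Multigraph V E} {T : Finset E} :
    ∀ {x y : V × {τ : Finset E // τ ⊆ Tᶜ}}, (cover G T).Walk x y → G.Walk x.1 y.1
  | _, _, .nil v => .nil v.1
  | _, _, .cons e h p =>
      .cons e.1
        (by
          rcases h with ⟨h1, h2⟩ | ⟨h1, h2⟩
          · exact Or.inl ⟨congrArg Prod.fst h1, congrArg Prod.fst h2⟩
          · exact Or.inr ⟨congrArg Prod.fst h1, congrArg Prod.fst h2⟩)
        (projWalk p)

/-- A path `p` in `G` from `x₀` to `y₀` is `(x,y)`-admissible (for vertices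
`x = (x₀, τ_x)`, `y = (y₀, τ_y)` of the cover) if for every `e ∈ S = Tᶜ`, the number
of occurrences of `e` among the edges of `p` is odd when `e ∈ τ_x △ τ_y` and even
otherwise. -/
def Admissible (G : Multigraph V E) (T : Finset E)
    (x y : V × {τ : Finset E // τ ⊆ Tᶜ}) (p : G.Walk x.1 y.1) : Prop :=
  ∀ e ∈ (Tᶜ : Finset E),
    p.edges.count e % 2 = if e ∈ symmDiff x.2.1 y.2.1 then 1 else 0

/-- The wall `w_e = π⁻¹(e)` of the `ℤ/2`-homology cover associated to an edge `e` of
the base graph. -/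
def wallOf (G : Multigraph V E) (T : Finset E) (e : E) :
    Set (E × {τ : Finset E // τ ⊆ Tᶜ}) := {f | f.1 = e}

/-- The wall metric on the `ℤ/2`-homology cover: the number of walls
`w_e = π⁻¹(e)`, `e ∈ E(G)`, separating `x` from `y`. -/
noncomputable def wallDist (G : Multigraph V E) (T : Finset E)
    (x y : V × {τ : Finset E // τ ⊆ Tᶜ}) : ℕ :=
  {e : E | (cover G T).Separates (wallOf G T e) x y}.ncard

end Multigraph

namespace Multigraph

variable {V E : Type} [Fintype E] [DecidableEq E] {G : Multigraph V E} {T : Finset E}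

lemma tauStep_invol (e : E) (τ : {τ : Finset E // τ ⊆ Tᶜ}) :
    tauStep T e (tauStep T e τ) = τ := by
  unfold tauStep
  by_cases he : e ∈ Tᶜ
  · simp only [dif_pos he]
    ext1
    simp [symmDiff_assoc]
  · simp only [dif_neg he]

lemma mem_tauStep_self {e : E} (he : e ∈ Tᶜ) (τ : {τ : Finset E // τ ⊆ Tᶜ}) :
    e ∈ (tauStep T e τ).1 ↔ ¬ e ∈ τ.1 := by
  unfold tauStep
  rw [dif_pos he]
  simp [Finset.mem_symmDiff]

lemma mem_tauStep_other {e f : E} (hfe : f ≠ e) (τ : {τ : Finset E // τ ⊆ Tᶜ}) :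
    e ∈ (tauStep T f τ).1 ↔ e ∈ τ.1 := by
  unfold tauStep
  by_cases hf : f ∈ Tᶜ
  · rw [dif_pos hf]
    simp [Finset.mem_symmDiff, Ne.symm hfe]
  · rw [dif_neg hf]

/-- The second coordinate of the endpoint of the lift of a walk starting at `τ`. -/
def endTau : ∀ {u v : V}, G.Walk u v → {τ : Finset E // τ ⊆ Tᶜ} → {τ : Finset E // τ ⊆ Tᶜ}
  | _, _, .nil _, τ => τ
  | _, _, .cons e _ p, τ => endTau p (tauStep T e τ)

open scoped Classical in
/-- The lift of a walk to the cover, starting at `(u, τ)`. -/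
noncomputable def liftWalk : ∀ {u v : V} (p : G.Walk u v) (τ : {τ : Finset E // τ ⊆ Tᶜ}),
    (cover G T).Walk (u, τ) (v, endTau p τ)
  | _, _, .nil v, τ => .nil (v, τ)
  | u, _, .cons (v := v) e h p, τ =>
    .cons (e, if G.src e = u ∧ G.tgt e = v then τ else tauStep T e τ)
      (by
        by_cases hc : G.src e = u ∧ G.tgt e = v
        · simp only [if_pos hc]
          exact Or.inl ⟨by simp [cover, hc.1], by simp [cover, hc.2]⟩
        · have h' : G.src e = v ∧ G.tgt e = u := by
            rcases h with h | h
            · exact absurd h hc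
            · exact h
          simp only [if_neg hc]
          refine Or.inr ⟨by simp [cover, h'.1], ?_⟩
          simp [cover, h'.2, tauStep_invol])
      (liftWalk p (tauStep T e τ))

lemma liftWalk_length : ∀ {u v : V} (p : G.Walk u v) (τ : {τ : Finset E // τ ⊆ Tᶜ}),
    (liftWalk p τ).length = p.length
  | _, _, .nil _, τ => rfl
  | _, _, .cons e h p, τ =>
    congrArg Nat.succ (liftWalk_length p (tauStep T e τ))

lemma projWalk_length : ∀ {a b : V × {τ : Finset E // τ ⊆ Tᶜ}}
    (q : (cover G T).Walk a b), (projWalk q).length = q.length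
  | _, _, .nil _ => rfl
  | _, _, .cons e h p => by
    simp [projWalk, Walk.length, projWalk_length p]

lemma projWalk_endTau : ∀ {a b : V × {τ : Finset E // τ ⊆ Tᶜ}}
    (q : (cover G T).Walk a b), b.2 = endTau (projWalk q) a.2
  | _, _, .nil _ => rfl
  | a, b, .cons (v := v) f h p => by
    have hv : v.2 = tauStep T f.1 a.2 := by
      rcases h with ⟨h1, h2⟩ | ⟨h1, h2⟩
      · have ha : f.2 = a.2 := congrArg Prod.snd h1
        have := congrArg Prod.snd h2
        simp only [cover] at this ha
        rw [← this, ha]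
      · have hv2 : f.2 = v.2 := congrArg Prod.snd h1
        have ha : tauStep T f.1 f.2 = a.2 := congrArg Prod.snd h2
        rw [← hv2, ← ha, tauStep_invol]
    have := projWalk_endTau p
    rw [hv] at this
    exact this

lemma mem_endTau : ∀ {u v : V} (p : G.Walk u v) (τ : {τ : Finset E // τ ⊆ Tᶜ})
    {e : E}, e ∈ Tᶜ →
    (e ∈ (endTau p τ).1 ↔ (e ∈ τ.1 ↔ p.edges.count e % 2 = 0))
  | _, _, .nil _, τ, e, he => by simp [endTau, Walk.edges]
  | _, _, .cons f hf p, τ, e, he => by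
    rw [show endTau (Walk.cons f hf p) τ = endTau p (tauStep T f τ) from rfl,
      mem_endTau p _ he]
    have hedges : (Walk.cons f hf p).edges = f :: p.edges := rfl
    by_cases hfe : f = e
    · subst hfe
      rw [hedges]
      have hc : (f :: p.edges).count f = p.edges.count f + 1 := by simp
      rw [hc, mem_tauStep_self he]
      have h2 : (p.edges.count f + 1) % 2 = 0 ↔ ¬ (p.edges.count f % 2 = 0) := by omega
      rw [h2]
      tauto
    · rw [hedges]
      have hc : (f :: p.edges).count e = p.edges.count e := by
        simp [List.count_cons, hfe]
      rw [hc, mem_tauStep_other hfe]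

lemma exists_walk_same_length {A B : Type} (H : Multigraph A B) {a b b' : A}
    (h : b = b') (q : H.Walk a b) : ∃ q' : H.Walk a b', q'.length = q.length := by
  subst h; exact ⟨q, rfl⟩

lemma admissible_iff_endTau {x y : V × {τ : Finset E // τ ⊆ Tᶜ}}
    (p : G.Walk x.1 y.1) :
    Admissible G T x y p ↔ y.2 = endTau p x.2 := by
  constructor
  · intro h
    ext e
    by_cases he : e ∈ Tᶜ
    · rw [mem_endTau p x.2 he]
      have hc := h e he
      by_cases hs : e ∈ symmDiff x.2.1 y.2.1
      · rw [if_pos hs] at hc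
        have hnc : ¬ p.edges.count e % 2 = 0 := by omega
        rw [Finset.mem_symmDiff] at hs
        tauto
      · rw [if_neg hs] at hc
        rw [Finset.mem_symmDiff] at hs
        push_neg at hs
        tauto
    · have h1 : e ∉ y.2.1 := fun hx => he (y.2.2 hx)
      have h2 : e ∉ (endTau p x.2).1 := fun hx => he ((endTau p x.2).2 hx)
      simp [h1, h2]
  · intro h e he
    have hm := mem_endTau p x.2 he (e := e)
    rw [← h] at hm
    by_cases hs : e ∈ symmDiff x.2.1 y.2.1
    · rw [if_pos hs, Finset.mem_symmDiff] at *
      have hnc : ¬ p.edges.count e % 2 = 0 := by tauto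
      omega
    · rw [if_neg hs]
      rw [Finset.mem_symmDiff] at hs
      push_neg at hs
      tauto

end Multigraph

open Multigraph in
/-- For a `ℤ/2`-pair `(G̃, G)`, the graph distance in `G̃` between `x` and `y` equals
the minimal length of an `(x,y)`-admissible path in `G`. -/
theorem graphDist_eq_min_admissible_length {V E : Type} [Fintype V] [Fintype E]
    [DecidableEq V] [DecidableEq E] (G : Multigraph V E)
    (hG : G.TwoConnected) (T : Finset E) (hT : G.IsSpanningTree T)
    (x y : V × {τ : Finset E // τ ⊆ Tᶜ}) :
    graphDist (cover G T) x y =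
      sInf {n : ℕ | ∃ p : G.Walk x.1 y.1, Admissible G T x y p ∧ p.length = n} := by
  unfold graphDist
  congr 1
  ext n
  constructor
  · rintro ⟨q, rfl⟩
    refine ⟨projWalk q, ?_, projWalk_length q⟩
    rw [admissible_iff_endTau]
    exact projWalk_endTau q
  · rintro ⟨p, hp, rfl⟩
    rw [admissible_iff_endTau] at hp
    have hy : (y.1, endTau p x.2) = y := by rw [← hp]
    obtain ⟨q', hq'⟩ := exists_walk_same_length _ hy (liftWalk p x.2)
    exact ⟨q', hq'.trans (liftWalk_length p x.2)⟩
end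

section
/- Let (G̃, G) be a ℤ/2-pair with wall structure W = { π^{−1}(e) : e ∈ E(G) } on G̃. Then for any vertices x, y of G̃ and any (x,y)-admissible path p in G, the wall distance d_W(x, y) equals the number of edges of G that appear an odd number of times in p. In particular this number is the same for all (x,y)-admissible paths. -/
namespace Multigraph

variable {V E : Type} {G : Multigraph V E}

theorem EndsAt.symm {e : E} {u v : V} (h : G.EndsAt e u v) : G.EndsAt e v u :=
  h.elim Or.inr Or.inl

namespace Walk

/-- Change the (propositionally equal) endpoints of a walk. -/
def copy {u v u' v' : V} (p : G.Walk u v) (hu : u = u') (hv : v = v') : G.Walk u' v' :=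
  hu ▸ hv ▸ p

@[simp] lemma edges_copy {u v u' v' : V} (p : G.Walk u v) (hu : u = u') (hv : v = v') :
    (p.copy hu hv).edges = p.edges := by subst hu; subst hv; rfl

/-- Concatenation of walks. -/
def append : ∀ {u v w : V}, G.Walk u v → G.Walk v w → G.Walk u w
  | _, _, _, .nil _, q => q
  | _, _, _, .cons e h p, q => .cons e h (append p q)

@[simp] lemma edges_append : ∀ {u v w : V} (p : G.Walk u v) (q : G.Walk v w),
    (p.append q).edges = p.edges ++ q.edges
  | _, _, _, .nil _, _ => rfl
  | _, _, _, .cons e h p, q => by simp [append, edges, edges_append p q]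

/-- Reversal of a walk. -/
def reverse : ∀ {u v : V}, G.Walk u v → G.Walk v u
  | _, _, .nil v => .nil v
  | _, _, .cons e h p => (reverse p).append (.cons e h.symm (.nil _))

@[simp] lemma edges_reverse : ∀ {u v : V} (p : G.Walk u v),
    (reverse p).edges = p.edges.reverse
  | _, _, .nil _ => rfl
  | _, _, .cons e h p => by simp [reverse, edges, edges_reverse p]

end Walk

section Homology

variable [Fintype V] [Fintype E] [DecidableEq V] [DecidableEq E]

lemma z2 (a : ZMod 2) : a + a = 0 := by revert a; decide

lemma z2' (x y z : ZMod 2) : x + y + (y + z) = x + z := by revert x y z; decide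

lemma z2'' (x y : ZMod 2) : x + y = 0 → x = y := by revert x y; decide

lemma z2'_s7'' (x y z : ZMod 2) : y + z + (x + y) = x + z := by revert x y z; decide

/-- The indicator function of a vertex, with values in `ZMod 2`. -/
def delta (v : V) : V → ZMod 2 := fun w => if v = w then 1 else 0

lemma delta_add_self (v : V) : delta (V := V) v + delta v = 0 := by
  funext w; exact z2 _

lemma sum_smul_delta (g : V → ZMod 2) : ∑ v : V, g v • delta v = g := by
  funext w
  simp only [Finset.sum_apply, Pi.smul_apply, delta, smul_eq_mul, mul_ite, mul_one, mul_zero]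
  simp

/-- The boundary (in `ZMod 2` homology) of the edge `f`. -/
def chi (G : Multigraph V E) (f : E) : V → ZMod 2 := delta (G.src f) + delta (G.tgt f)

lemma chi_ends {e : E} {u v : V} (h : G.EndsAt e u v) : chi G e = delta u + delta v := by
  rcases h with ⟨h1, h2⟩ | ⟨h1, h2⟩ <;> rw [chi, h1, h2]
  exact add_comm _ _

lemma sum_count_chi {a b : V} (p : G.Walk a b) :
    ∑ f : E, (p.edges.count f : ZMod 2) • chi G f = delta a + delta b := by
  induction p with
  | nil v =>
    simp only [Walk.edges, List.count_nil, Nat.cast_zero, zero_smul, Finset.sum_const_zero]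
    exact (delta_add_self v).symm
  | cons e h p ih =>
    have hcount : ∀ f : E, (Walk.cons e h p).edges.count f = p.edges.count f
        + if e = f then 1 else 0 := by
      intro f
      simp [Walk.edges, List.count_cons]
    have hsplit : ∑ f : E, ((Walk.cons e h p).edges.count f : ZMod 2) • chi G f
        = (∑ f : E, (p.edges.count f : ZMod 2) • chi G f)
          + ∑ f : E, (if e = f then (1 : ZMod 2) else 0) • chi G f := by
      rw [← Finset.sum_add_distrib]
      refine Finset.sum_congr rfl fun f _ => ?_
      rw [hcount f]
      push_cast
      rw [add_smul]
    have hsingle : ∑ f : E, (if e = f then (1 : ZMod 2) else 0) • chi G f = chi G e := by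
      rw [Finset.sum_eq_single e]
      · simp
      · intro f _ hf; simp [Ne.symm hf]
      · simp
    rw [hsplit, ih, hsingle, chi_ends h]
    funext w'
    simp only [Pi.add_apply]
    exact z2'_s7'' _ _ _

lemma tree_indep {T : Finset E} (hT : G.IsSpanningTree T) (c : E → ZMod 2)
    (hc0 : ∀ f ∉ T, c f = 0) (hsum : ∑ f : E, c f • chi G f = 0) : ∀ f, c f = 0 := by
  have hV : Nonempty V := by
    have h2 := hT.2
    have : 0 < Fintype.card V := by omega
    exact Fintype.card_pos_iff.mp this
  obtain ⟨u₀⟩ := hV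
  set b : Option {f // f ∈ T} → (V → ZMod 2) :=
    fun o => o.elim (delta u₀) (fun f => chi G f.1) with hb
  have hspan : ⊤ ≤ Submodule.span (ZMod 2) (Set.range b) := by
    have hδ : ∀ v : V, delta v ∈ Submodule.span (ZMod 2) (Set.range b) := by
      intro v
      obtain ⟨p, hp⟩ := hT.1 u₀ v
      have h1 : delta u₀ + delta v ∈ Submodule.span (ZMod 2) (Set.range b) := by
        rw [← sum_count_chi p]
        refine Submodule.sum_mem _ fun f _ => ?_
        by_cases hf : f ∈ T
        · exact Submodule.smul_mem _ _ (Submodule.subset_span ⟨some ⟨f, hf⟩, rfl⟩)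
        · have hcf : p.edges.count f = 0 :=
            List.count_eq_zero_of_not_mem (fun hm => hf (hp f hm))
          rw [hcf]
          simp
      have h0 : delta u₀ ∈ Submodule.span (ZMod 2) (Set.range b) :=
        Submodule.subset_span ⟨none, rfl⟩
      have h2 := Submodule.add_mem _ h0 h1
      have h3 : delta u₀ + (delta u₀ + delta v) = delta v := by
        funext w
        simp only [Pi.add_apply]
        generalize delta u₀ w = x
        generalize delta v w = y
        revert x y; decide
      rwa [h3] at h2
    intro g _
    have hg : g = ∑ v : V, g v • delta v := (sum_smul_delta g).symm
    rw [hg]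
    exact Submodule.sum_mem _ fun v _ => Submodule.smul_mem _ _ (hδ v)
  have hcard : Fintype.card (Option {f // f ∈ T}) =
      Module.finrank (ZMod 2) (V → ZMod 2) := by
    rw [Module.finrank_pi]
    rw [Fintype.card_option, Fintype.card_coe]
    exact hT.2
  have hli := linearIndependent_of_top_le_span_of_card_eq_finrank hspan hcard
  have key := Fintype.linearIndependent_iff.mp hli
    (fun o => o.elim 0 (fun f => c f.1))
  have hsum2 : ∑ o : Option {f // f ∈ T},
      (o.elim 0 (fun f => c f.1)) • b o = 0 := by
    rw [Fintype.sum_option]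
    simp only [Option.elim, hb]
    rw [zero_smul, zero_add]
    have hattach : ∑ f : {f // f ∈ T}, c f.1 • chi G f.1 = ∑ f ∈ T, c f • chi G f :=
      Finset.sum_coe_sort T (fun f => c f • chi G f)
    rw [hattach, Finset.sum_subset (Finset.subset_univ T)]
    · exact hsum
    · intro f _ hf
      rw [hc0 f hf, zero_smul]
  intro f
  by_cases hf : f ∈ T
  · exact key hsum2 (some ⟨f, hf⟩)
  · exact hc0 f hf

lemma parity_invariant {T : Finset E} (hT : G.IsSpanningTree T) {a b : V}
    (p q : G.Walk a b) (h : ∀ f ∈ Tᶜ, p.edges.count f % 2 = q.edges.count f % 2) :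
    ∀ f : E, p.edges.count f % 2 = q.edges.count f % 2 := by
  set c : E → ZMod 2 := fun f => (p.edges.count f : ZMod 2) + (q.edges.count f : ZMod 2)
    with hc
  have hc0 : ∀ f ∉ T, c f = 0 := by
    intro f hf
    have h2 := h f (Finset.mem_compl.mpr hf)
    have h3 : ((p.edges.count f : ℕ) : ZMod 2) = ((q.edges.count f : ℕ) : ZMod 2) :=
      (ZMod.natCast_eq_natCast_iff' _ _ _).mpr h2
    rw [hc]
    simp only []
    rw [h3]
    exact z2 _
  have hsum : ∑ f : E, c f • chi G f = 0 := by
    simp only [hc, add_smul, Finset.sum_add_distrib, sum_count_chi]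
    funext w
    simp only [Pi.add_apply, Pi.zero_apply]
    exact z2 _
  have hall := tree_indep hT c hc0 hsum
  intro f
  exact (ZMod.natCast_eq_natCast_iff' _ _ _).mp (z2'' _ _ (hall f))


end Homology

section Tau

variable [Fintype E] [DecidableEq E] {T : Finset E}

lemma tauStep_tauStep (f : E) (τ : {τ : Finset E // τ ⊆ Tᶜ}) :
    tauStep T f (tauStep T f τ) = τ := by
  unfold tauStep
  by_cases hf : f ∈ Tᶜ
  · simp only [dif_pos hf]
    exact Subtype.ext (symmDiff_symmDiff_cancel_right _ _)
  · simp only [dif_neg hf]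

/-- Applying `tauStep` along a list of edges. -/
def tauList (T : Finset E) (L : List E) (τ : {τ : Finset E // τ ⊆ Tᶜ}) :
    {τ : Finset E // τ ⊆ Tᶜ} :=
  L.foldl (fun σ f => tauStep T f σ) τ

@[simp] lemma tauList_nil (τ : {τ : Finset E // τ ⊆ Tᶜ}) : tauList T [] τ = τ := rfl

lemma tauList_cons (f : E) (L : List E) (τ : {τ : Finset E // τ ⊆ Tᶜ}) :
    tauList T (f :: L) τ = tauList T L (tauStep T f τ) := rfl

/-- The set of edges outside the spanning tree appearing an odd number of times in `L`. -/
def oddFinset (T : Finset E) (L : List E) : Finset E :=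
  Finset.univ.filter fun e => e ∈ Tᶜ ∧ L.count e % 2 = 1

lemma mem_oddFinset {e : E} {L : List E} :
    e ∈ oddFinset T L ↔ e ∈ Tᶜ ∧ L.count e % 2 = 1 := by
  simp [oddFinset]

lemma oddFinset_cons (f : E) (L : List E) :
    oddFinset T (f :: L) =
      if f ∈ Tᶜ then symmDiff {f} (oddFinset T L) else oddFinset T L := by
  have hcf : ∀ e : E, (f :: L).count e = L.count e + if f = e then 1 else 0 := by
    intro e
    simp [List.count_cons]
  by_cases hf : f ∈ Tᶜ
  · rw [if_pos hf]
    ext e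
    by_cases he : e = f
    · subst he
      constructor
      · intro hmem
        have hcnt := (mem_oddFinset.mp hmem).2
        rw [hcf, if_pos rfl] at hcnt
        rw [Finset.mem_symmDiff]
        left
        refine ⟨Finset.mem_singleton_self _, fun hmem2 => ?_⟩
        have h5 := (mem_oddFinset.mp hmem2).2
        omega
      · intro hmem
        rw [Finset.mem_symmDiff] at hmem
        refine mem_oddFinset.mpr ⟨hf, ?_⟩
        rw [hcf, if_pos rfl]
        rcases hmem with ⟨-, h2⟩ | ⟨-, h3⟩
        · have h4 : ¬ (L.count _ % 2 = 1) := fun hh => h2 (mem_oddFinset.mpr ⟨hf, hh⟩)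
          omega
        · exact absurd (Finset.mem_singleton_self _) h3
    · rw [Finset.mem_symmDiff]
      simp only [mem_oddFinset, hcf e, if_neg (fun hh : f = e => he hh.symm), add_zero,
        Finset.mem_singleton, he]
      tauto
  · rw [if_neg hf]
    ext e
    simp only [mem_oddFinset, hcf e]
    by_cases he : f = e
    · subst he
      simp [hf]
    · rw [if_neg he, add_zero]

lemma tauList_spec : ∀ (L : List E) (τ : {τ : Finset E // τ ⊆ Tᶜ}),
    (tauList T L τ).1 = symmDiff τ.1 (oddFinset T L)
  | [], τ => by
    have h : oddFinset T ([] : List E) = ∅ := by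
      ext e
      simp [oddFinset]
    rw [tauList_nil, h, ← Finset.bot_eq_empty, symmDiff_bot]
  | f :: L, τ => by
    rw [tauList_cons, tauList_spec L (tauStep T f τ), oddFinset_cons]
    by_cases hf : f ∈ Tᶜ
    · rw [if_pos hf]
      have h : (tauStep T f τ).1 = symmDiff τ.1 {f} := by
        unfold tauStep
        rw [dif_pos hf]
      rw [h, symmDiff_assoc]
    · rw [if_neg hf]
      have h : (tauStep T f τ).1 = τ.1 := by
        unfold tauStep
        rw [dif_neg hf]
      rw [h]

lemma tauList_eq_iff {L : List E} {σ τ : {τ : Finset E // τ ⊆ Tᶜ}} :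
    tauList T L σ = τ ↔
      ∀ e ∈ Tᶜ, L.count e % 2 = if e ∈ symmDiff σ.1 τ.1 then 1 else 0 := by
  rw [Subtype.ext_iff, tauList_spec]
  constructor
  · intro h e he
    have hmem : e ∈ symmDiff σ.1 τ.1 ↔ e ∈ oddFinset T L := by
      rw [← h, symmDiff_symmDiff_cancel_left]
    by_cases hodd : L.count e % 2 = 1
    · rw [if_pos (hmem.mpr (mem_oddFinset.mpr ⟨he, hodd⟩))]
      exact hodd
    · rw [if_neg (fun hc => hodd (mem_oddFinset.mp (hmem.mp hc)).2)]
      omega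
  · intro h
    ext e
    by_cases he : e ∈ Tᶜ
    · specialize h e he
      have hodd : e ∈ oddFinset T L ↔ L.count e % 2 = 1 := by
        simp [mem_oddFinset, he]
      split_ifs at h with hc
      · rw [Finset.mem_symmDiff] at hc
        rw [Finset.mem_symmDiff]
        have hin : e ∈ oddFinset T L := hodd.mpr h
        tauto
      · rw [Finset.mem_symmDiff] at hc
        rw [Finset.mem_symmDiff]
        have hout : e ∉ oddFinset T L := fun hmem => by
          have := hodd.mp hmem
          omega
        tauto
    · have h1 : e ∉ τ.1 := fun hm => he (τ.2 hm)
      have h2 : e ∉ σ.1 := fun hm => he (σ.2 hm)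
      have h3 : e ∉ oddFinset T L := fun hm => he (mem_oddFinset.mp hm).1
      rw [Finset.mem_symmDiff]
      tauto

end Tau

section Cover

variable [Fintype E] [DecidableEq E] {T : Finset E}

lemma exists_lift (G : Multigraph V E) (T : Finset E) {a b : V} [DecidableEq V]
    (p : G.Walk a b) (τ : {τ : Finset E // τ ⊆ Tᶜ}) :
    ∃ q : (cover G T).Walk (a, τ) (b, tauList T p.edges τ),
      q.edges.map Prod.fst = p.edges := by
  induction p generalizing τ with
  | nil v => exact ⟨.nil _, rfl⟩
  | cons e h p ih =>
    rename_i u v w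
    obtain ⟨q, hq⟩ := ih (tauStep T e τ)
    by_cases hsrc : G.src e = u
    · have htgt : G.tgt e = v := by
        rcases h with ⟨h1, h2⟩ | ⟨h1, h2⟩
        · exact h2
        · rw [h2, ← hsrc, h1]
      refine ⟨.cons (e, τ) (Or.inl ⟨?_, ?_⟩) q, ?_⟩
      · show (G.src e, τ) = (u, τ)
        rw [hsrc]
      · show (G.tgt e, tauStep T e τ) = (v, tauStep T e τ)
        rw [htgt]
      · simp [Walk.edges]
        exact hq
    · have h1 : G.src e = v ∧ G.tgt e = u := by
        rcases h with ⟨h1, h2⟩ | h1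
        · exact absurd h1 hsrc
        · exact h1
      refine ⟨.cons (e, tauStep T e τ) (Or.inr ⟨?_, ?_⟩) q, ?_⟩
      · show (G.src e, tauStep T e τ) = (v, tauStep T e τ)
        rw [h1.1]
      · show (G.tgt e, tauStep T e (tauStep T e τ)) = (u, τ)
        rw [h1.2, tauStep_tauStep]
      · simp [Walk.edges]
        exact hq

lemma projWalk_edges {G : Multigraph V E} :
    ∀ {x y} (q : (cover G T).Walk x y), (projWalk q).edges = q.edges.map Prod.fst
  | _, _, .nil _ => rfl
  | _, _, .cons e h q => by simp [projWalk, Walk.edges, projWalk_edges q]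

lemma proj_snd {G : Multigraph V E} {x y} (q : (cover G T).Walk x y) :
    y.2 = tauList T (projWalk q).edges x.2 := by
  induction q with
  | nil v => rfl
  | cons e h q ih =>
    rename_i u v w
    have hmid : v.2 = tauStep T e.1 u.2 := by
      rcases h with ⟨h1, h2⟩ | ⟨h1, h2⟩
      · have hu : u.2 = e.2 := (congrArg Prod.snd h1).symm
        have hv : v.2 = tauStep T e.1 e.2 := (congrArg Prod.snd h2).symm
        rw [hv, hu]
      · have hv : v.2 = e.2 := (congrArg Prod.snd h1).symm
        have hu : u.2 = tauStep T e.1 e.2 := (congrArg Prod.snd h2).symm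
        rw [hu, tauStep_tauStep, hv]
    show w.2 = tauList T (projWalk (Walk.cons e h q)).edges u.2
    have hpe : (projWalk (Walk.cons e h q)).edges = e.1 :: (projWalk q).edges := rfl
    rw [hpe, tauList_cons, ← hmid]
    exact ih

end Cover

section Detour

variable {G : Multigraph V E} [DecidableEq V] [DecidableEq E]

lemma count_cons_self (x : E) (L : List E) : (x :: L).count x = L.count x + 1 := by
  simp [List.count_cons]

lemma count_cons_ne {x y : E} (L : List E) (hxy : x ≠ y) :
    (x :: L).count y = L.count y := by
  simp [List.count_cons, hxy]

lemma exists_detour {e : E} {a b : V} (D : G.Walk (G.src e) (G.tgt e))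
    (hD : e ∉ D.edges) (p : G.Walk a b) :
    ∃ r : G.Walk a b, e ∉ r.edges ∧
      ∀ f : E, f ≠ e →
        r.edges.count f % 2
          = (p.edges.count f + p.edges.count e * D.edges.count f) % 2 := by
  induction p with
  | nil v =>
    refine ⟨.nil v, by simp [Walk.edges], fun f _ => by simp [Walk.edges]⟩
  | cons g h p ih =>
    rename_i u v w
    obtain ⟨r, hre, hrc⟩ := ih
    by_cases hg : g = e
    · subst hg
      have hkey : ∀ (D' : G.Walk u v), (∀ f' ∈ D'.edges, D'.edges.count f' = D.edges.count f') →
          True := fun _ _ => trivial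
      by_cases hsrc : G.src g = u
      · have htgt : G.tgt g = v := by
          rcases h with ⟨h1, h2⟩ | ⟨h1, h2⟩
          · exact h2
          · rw [h2, ← hsrc, h1]
        refine ⟨(D.copy hsrc htgt).append r, ?_, ?_⟩
        · intro hmem
          rw [Walk.edges_append, Walk.edges_copy] at hmem
          rcases List.mem_append.mp hmem with hm | hm
          · exact hD hm
          · exact hre hm
        · intro f hf
          rw [Walk.edges_append, Walk.edges_copy, List.count_append]
          simp only [Walk.edges]
          rw [count_cons_ne p.edges (fun hh => hf hh.symm), count_cons_self]
          have h5 := hrc f hf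
          rw [add_mul, one_mul]
          generalize p.edges.count g * D.edges.count f = P at h5 ⊢
          omega
      · have h1 : G.src g = v ∧ G.tgt g = u := by
          rcases h with ⟨h1, h2⟩ | h1
          · exact absurd h1 hsrc
          · exact h1
        refine ⟨((D.reverse).copy h1.2 h1.1).append r, ?_, ?_⟩
        · intro hmem
          rw [Walk.edges_append, Walk.edges_copy, Walk.edges_reverse] at hmem
          rcases List.mem_append.mp hmem with hm | hm
          · exact hD (List.mem_reverse.mp hm)
          · exact hre hm
        · intro f hf
          rw [Walk.edges_append, Walk.edges_copy, Walk.edges_reverse, List.count_append,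
            List.count_reverse]
          simp only [Walk.edges]
          rw [count_cons_ne p.edges (fun hh => hf hh.symm), count_cons_self]
          have h5 := hrc f hf
          rw [add_mul, one_mul]
          generalize p.edges.count g * D.edges.count f = P at h5 ⊢
          omega
    · refine ⟨.cons g h r, ?_, ?_⟩
      · intro hmem
        rcases hmem with _ | hmem
        · exact hg rfl
        · exact hre (by assumption)
      · intro f hf
        simp only [Walk.edges]
        rw [count_cons_ne p.edges hg]
        by_cases hgf : g = f
        · subst hgf
          rw [count_cons_self, count_cons_self]
          have h5 := hrc g hf
          generalize p.edges.count e * D.edges.count g = P at h5 ⊢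
          omega
        · rw [count_cons_ne _ hgf, count_cons_ne _ hgf]
          exact hrc f hf

end Detour

end Multigraph



open Multigraph in
/-- For a `ℤ/2`-pair `(G̃, G)` and vertices `x`, `y` of `G̃`, the wall distance
`d_W(x,y)` equals the number of edges of `G` appearing an odd number of times in any
`(x,y)`-admissible path in `G` (in particular, this number does not depend on the
chosen admissible path). -/
theorem wallDist_eq_odd_edges {V E : Type} [Fintype V] [Fintype E]
    [DecidableEq V] [DecidableEq E] (G : Multigraph V E)
    (hG : G.TwoConnected) (T : Finset E) (hT : G.IsSpanningTree T)
    (x y : V × {τ : Finset E // τ ⊆ Tᶜ}) (p : G.Walk x.1 y.1)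
    (hadm : Admissible G T x y p) :
    wallDist G T x y = {e : E | p.edges.count e % 2 = 1}.ncard := by
  unfold wallDist
  congr 1
  ext e
  simp only [Set.mem_setOf_eq]
  constructor
  · -- separation implies odd count
    intro hsep
    by_contra hodd
    have heven : p.edges.count e % 2 = 0 := by omega
    obtain ⟨D, hD⟩ := hG.2 e (G.src e) (G.tgt e)
    have hDne : e ∉ D.edges := fun hm => hD e hm rfl
    obtain ⟨r, hre, hrc⟩ := exists_detour D hDne p
    have hpar : ∀ f : E, r.edges.count f % 2 = p.edges.count f % 2 := by
      intro f
      by_cases hf : f = e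
      · subst hf
        rw [List.count_eq_zero_of_not_mem hre]
        omega
      · have h5 := hrc f hf
        have h6 : (p.edges.count e * D.edges.count f) % 2 = 0 := by
          have h7 := Nat.mul_mod (p.edges.count e) (D.edges.count f) 2
          rw [heven] at h7
          simpa using h7
        generalize p.edges.count e * D.edges.count f = P at h5 h6
        omega
    have hadm_r : tauList T r.edges x.2 = y.2 := by
      rw [tauList_eq_iff]
      intro f hf
      rw [hpar f]
      exact hadm f hf
    obtain ⟨q, hq⟩ := exists_lift G T r x.2
    apply hsep
    have hcast : ((y.1 : V), tauList T r.edges x.2) = y := by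
      rw [hadm_r]
    refine ⟨q.copy rfl hcast, ?_⟩
    intro f hfmem hfw
    have h8 : f.1 ∈ r.edges := by
      rw [← hq]
      rw [Walk.edges_copy] at hfmem
      exact List.mem_map_of_mem (f := Prod.fst) hfmem
    have h9 : f.1 = e := hfw
    rw [h9] at h8
    exact hre h8
  · -- odd count implies separation
    intro hodd hreach
    obtain ⟨q, hq⟩ := hreach
    have hsnd : y.2 = tauList T (projWalk q).edges x.2 := proj_snd q
    have hradm : ∀ f ∈ Tᶜ, (projWalk q).edges.count f % 2
        = if f ∈ symmDiff x.2.1 y.2.1 then 1 else 0 :=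
      tauList_eq_iff.mp hsnd.symm
    have hpar := parity_invariant hT p (projWalk q)
      (fun f hf => by rw [hadm f hf, hradm f hf])
    have hcount : (projWalk q).edges.count e % 2 = 1 := by
      rw [← hpar e]
      exact hodd
    have hmem : e ∈ (projWalk q).edges := by
      by_contra hnm
      rw [List.count_eq_zero_of_not_mem hnm] at hcount
      omega
    rw [projWalk_edges] at hmem
    obtain ⟨f, hfq, hfe⟩ := List.mem_map.mp hmem
    exact hq f hfq hfe
end
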